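/- Let T₁₁, T₂₁, T₂₂ be matrices over a field of sizes ν₁×μ₁, ν₂×μ₁, ν₂×μ₂. Then there exists a matrix X of size ν₁×μ₂ such that rank[[T₁₁, X],[T₂₁, T₂₂]] = rank[T₁₁; T₂₁] + rank[T₂₁ T₂₂] − rank T₂₁. -/

import Mathlib

open Matrix Module

/-- Every linear map between vector spaces has a generalized inverse. -/
lemma exists_linear_ginverse {F V W : Type*} [Field F] [AddCommGroup V] [Module F V]
    [AddCommGroup W] [Module F W] (f : V →ₗ[F] W) :
    ∃ g : W →ₗ[F] V, ∀ v, f (g (f v)) = f v := by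
  obtain ⟨q, hq⟩ := (LinearMap.range f).exists_isCompl
  obtain ⟨s, hs⟩ := f.rangeRestrict.exists_rightInverse_of_surjective f.range_rangeRestrict
  refine ⟨s ∘ₗ Submodule.linearProjOfIsCompl _ q hq, ?_⟩
  intro v
  have hproj : (Submodule.linearProjOfIsCompl (LinearMap.range f) q hq) (f v) =
      ⟨f v, LinearMap.mem_range_self f v⟩ :=
    Submodule.linearProjOfIsCompl_apply_left hq ⟨f v, LinearMap.mem_range_self f v⟩
  have hsec : ∀ x : LinearMap.range f, f (s x) = (x : W) := by
    intro x
    have := LinearMap.ext_iff.mp hs x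
    exact congrArg Subtype.val this
  simp only [LinearMap.comp_apply, LinearMap.id_apply]
  rw [hproj, hsec]

/-- Every matrix over a field has a generalized inverse. -/
lemma exists_matrix_ginverse {F : Type*} [Field F] {m n : ℕ}
    (T : Matrix (Fin m) (Fin n) F) :
    ∃ G : Matrix (Fin n) (Fin m) F, T * G * T = T := by
  obtain ⟨g, hg⟩ := exists_linear_ginverse T.mulVecLin
  refine ⟨LinearMap.toMatrix' g, ?_⟩
  apply Matrix.toLin'.injective
  apply LinearMap.ext
  intro v
  have h1 : Matrix.toLin' T = T.mulVecLin := rfl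
  rw [Matrix.toLin'_mul_apply, Matrix.toLin'_mul_apply, Matrix.toLin'_toMatrix', h1]
  exact hg v

/-- Column space of a column-concatenated matrix is the sup of the column spaces. -/
lemma range_mulVecLin_fromColumns {F : Type*} [Field F] {m n₁ n₂ : Type*}
    [Fintype n₁] [Fintype n₂] (A : Matrix m n₁ F) (B : Matrix m n₂ F) :
    LinearMap.range (Matrix.fromCols A B).mulVecLin =
      LinearMap.range A.mulVecLin ⊔ LinearMap.range B.mulVecLin := by
  apply le_antisymm
  · rintro x ⟨v, rfl⟩
    rw [Matrix.mulVecLin_apply, ← Sum.elim_comp_inl_inr v,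
      Matrix.fromCols_mulVec_sumElim]
    exact Submodule.add_mem_sup ⟨_, rfl⟩ ⟨_, rfl⟩
  · rw [sup_le_iff]
    constructor
    · rintro x ⟨v, rfl⟩
      refine ⟨Sum.elim v 0, ?_⟩
      simp [Matrix.mulVecLin_apply, Matrix.fromCols_mulVec_sumElim]
    · rintro x ⟨v, rfl⟩
      refine ⟨Sum.elim 0 v, ?_⟩
      simp [Matrix.mulVecLin_apply, Matrix.fromCols_mulVec_sumElim]

/-- Attainability half of the 2×2 minimal rank completion formula. -/
theorem rank_completion_attained {F : Type*} [Field F] {ν₁ ν₂ μ₁ μ₂ : ℕ}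
    (T₁₁ : Matrix (Fin ν₁) (Fin μ₁) F) (T₂₁ : Matrix (Fin ν₂) (Fin μ₁) F)
    (T₂₂ : Matrix (Fin ν₂) (Fin μ₂) F) :
    ∃ X : Matrix (Fin ν₁) (Fin μ₂) F,
      (Matrix.fromBlocks T₁₁ X T₂₁ T₂₂).rank =
        (Matrix.fromRows T₁₁ T₂₁).rank + (Matrix.fromCols T₂₁ T₂₂).rank
          - T₂₁.rank := by
  classical
  obtain ⟨G, hG⟩ := exists_matrix_ginverse T₂₁
  set T' : Matrix (Fin ν₂) (Fin μ₂) F := T₂₂ - T₂₁ * (G * T₂₂) with hT'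
  set P : Matrix (Fin ν₂) (Fin ν₂) F := 1 - T₂₁ * G with hP
  have hPT21 : P * T₂₁ = 0 := by
    rw [hP, Matrix.sub_mul, Matrix.one_mul, Matrix.mul_assoc, ← Matrix.mul_assoc, hG, sub_self]
  have hGT' : T₂₁ * G * T' = 0 := by
    rw [hT', Matrix.mul_sub, ← Matrix.mul_assoc, ← Matrix.mul_assoc, hG, Matrix.mul_assoc,
      sub_self]
  have hPT' : P * T' = T' := by
    rw [hP, Matrix.sub_mul, Matrix.one_mul, hGT', sub_zero]
  -- key: the column spaces of T₂₁ and T' intersect trivially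
  have hkey : ∀ (a : Fin μ₁ → F) (b : Fin μ₂ → F),
      T₂₁ *ᵥ a = T' *ᵥ b → T₂₁ *ᵥ a = 0 ∧ T' *ᵥ b = 0 := by
    intro a b h
    have h1 : P *ᵥ (T₂₁ *ᵥ a) = P *ᵥ (T' *ᵥ b) := by rw [h]
    rw [Matrix.mulVec_mulVec, Matrix.mulVec_mulVec, hPT21, hPT',
      Matrix.zero_mulVec] at h1
    refine ⟨?_, h1.symm⟩
    rw [h, ← h1]
  have hdisj : LinearMap.range T₂₁.mulVecLin ⊓ LinearMap.range T'.mulVecLin = ⊥ := by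
    rw [eq_bot_iff]
    rintro x ⟨⟨a, ha⟩, ⟨b, hb⟩⟩
    obtain ⟨h1, _⟩ := hkey a b (by rw [Matrix.mulVecLin_apply] at ha hb; rw [ha, hb])
    rw [Matrix.mulVecLin_apply] at ha
    simpa [← ha] using h1
  -- Step A : rank (fromColumns T₂₁ T₂₂) = rank T₂₁ + rank T'
  have hrange22 : LinearMap.range T₂₁.mulVecLin ⊔ LinearMap.range T₂₂.mulVecLin =
      LinearMap.range T₂₁.mulVecLin ⊔ LinearMap.range T'.mulVecLin := by
    apply le_antisymm <;> rw [sup_le_iff] <;>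
        refine ⟨le_sup_left, ?_⟩ <;> rintro x ⟨v, rfl⟩
    · have : T₂₂ *ᵥ v = T₂₁ *ᵥ ((G * T₂₂) *ᵥ v) + T' *ᵥ v := by
        rw [Matrix.mulVec_mulVec, hT', Matrix.sub_mulVec, ← Matrix.mulVec_mulVec]
        abel
      rw [Matrix.mulVecLin_apply, this]
      exact Submodule.add_mem_sup ⟨_, rfl⟩ ⟨_, rfl⟩
    · have : T' *ᵥ v = T₂₁ *ᵥ (-((G * T₂₂) *ᵥ v)) + T₂₂ *ᵥ v := by
        rw [hT', Matrix.sub_mulVec, Matrix.mulVec_neg, Matrix.mulVec_mulVec,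
          ← Matrix.mulVec_mulVec]
        abel
      rw [Matrix.mulVecLin_apply, this]
      exact Submodule.add_mem_sup ⟨_, rfl⟩ ⟨_, rfl⟩
  have hA : (Matrix.fromCols T₂₁ T₂₂).rank = T₂₁.rank + T'.rank := by
    rw [Matrix.rank, range_mulVecLin_fromColumns, hrange22, Matrix.rank, Matrix.rank]
    have := Submodule.finrank_sup_add_finrank_inf_eq
      (LinearMap.range T₂₁.mulVecLin) (LinearMap.range T'.mulVecLin)
    rw [hdisj, finrank_bot, add_zero] at this
    exact this
  -- the embedding of F^ν₂ into the second block of F^(ν₁ ⊕ ν₂)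
  let e : (Fin ν₂ → F) →ₗ[F] (Fin ν₁ ⊕ Fin ν₂ → F) :=
    { toFun := fun v => Sum.elim 0 v
      map_add' := by intro u v; ext (i | i) <;> simp
      map_smul' := by intro c v; ext (i | i) <;> simp }
  have he : Function.Injective e := by
    intro u v h
    funext i
    exact congrFun h (Sum.inr i)
  have hrangeB : LinearMap.range (Matrix.fromRows (0 : Matrix (Fin ν₁) (Fin μ₂) F)
      T').mulVecLin = (LinearMap.range T'.mulVecLin).map e := by
    apply le_antisymm
    · rintro x ⟨v, rfl⟩
      exact ⟨T' *ᵥ v, ⟨v, rfl⟩, by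
        simp [e, Matrix.mulVecLin_apply, Matrix.fromRows_mulVec, Matrix.zero_mulVec]⟩
    · rintro x ⟨y, ⟨v, rfl⟩, rfl⟩
      exact ⟨v, by
        simp [e, Matrix.mulVecLin_apply, Matrix.fromRows_mulVec, Matrix.zero_mulVec]⟩
  -- Step B : rank (fromBlocks T₁₁ 0 T₂₁ T') = rank (fromRows T₁₁ T₂₁) + rank T'
  have hdisjB : LinearMap.range (Matrix.fromRows T₁₁ T₂₁).mulVecLin ⊓
      LinearMap.range (Matrix.fromRows (0 : Matrix (Fin ν₁) (Fin μ₂) F) T').mulVecLin = ⊥ := by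
    rw [eq_bot_iff]
    rintro x ⟨⟨a, ha⟩, ⟨b, hb⟩⟩
    rw [Matrix.mulVecLin_apply, Matrix.fromRows_mulVec] at ha hb
    have h21 : T₂₁ *ᵥ a = T' *ᵥ b := by
      funext i
      have := congrFun (ha.trans hb.symm) (Sum.inr i)
      simpa using this
    obtain ⟨h1, _⟩ := hkey a b h21
    have h11 : T₁₁ *ᵥ a = (0 : Matrix (Fin ν₁) (Fin μ₂) F) *ᵥ b := by
      funext i
      have := congrFun (ha.trans hb.symm) (Sum.inl i)
      simpa using this
    rw [Matrix.zero_mulVec] at h11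
    rw [Submodule.mem_bot, ← ha, h11, h1]
    ext i
    cases i <;> rfl
  have hB : (Matrix.fromBlocks T₁₁ 0 T₂₁ T').rank =
      (Matrix.fromRows T₁₁ T₂₁).rank + T'.rank := by
    rw [← Matrix.fromCols_fromRows_eq_fromBlocks, Matrix.rank,
      range_mulVecLin_fromColumns]
    have hfr : finrank F (LinearMap.range (Matrix.fromRows (0 : Matrix (Fin ν₁) (Fin μ₂) F)
        T').mulVecLin) = T'.rank := by
      rw [hrangeB, Matrix.rank]
      exact ((LinearMap.range T'.mulVecLin).equivMapOfInjective e he).finrank_eq.symm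
    have := Submodule.finrank_sup_add_finrank_inf_eq
      (LinearMap.range (Matrix.fromRows T₁₁ T₂₁).mulVecLin)
      (LinearMap.range (Matrix.fromRows (0 : Matrix (Fin ν₁) (Fin μ₂) F) T').mulVecLin)
    rw [hdisjB, finrank_bot, add_zero, hfr] at this
    rw [this]
    rfl
  -- Step C : column operation
  set X : Matrix (Fin ν₁) (Fin μ₂) F := T₁₁ * (G * T₂₂) with hX
  set U : Matrix (Fin μ₁ ⊕ Fin μ₂) (Fin μ₁ ⊕ Fin μ₂) F :=
    Matrix.fromBlocks 1 (-(G * T₂₂)) 0 1 with hU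
  have hmul : Matrix.fromBlocks T₁₁ X T₂₁ T₂₂ * U = Matrix.fromBlocks T₁₁ 0 T₂₁ T' := by
    rw [hU, Matrix.fromBlocks_multiply]
    ext (i | i) (j | j) <;>
      simp [hX, hT', Matrix.mul_neg, Matrix.mul_assoc, sub_eq_neg_add, Matrix.sub_apply,
        Matrix.neg_apply]
  have hdet : IsUnit U.det := by
    rw [hU, Matrix.det_fromBlocks_zero₂₁, Matrix.det_one, Matrix.det_one, mul_one]
    exact isUnit_one
  have hC : (Matrix.fromBlocks T₁₁ X T₂₁ T₂₂).rank = (Matrix.fromBlocks T₁₁ 0 T₂₁ T').rank := by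
    rw [← Matrix.rank_mul_eq_left_of_isUnit_det U _ hdet, hmul]
  refine ⟨X, ?_⟩
  rw [hC, hB, hA]
  omega
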